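/- Let x⁽¹⁾ and x⁽²⁾ be independent random vectors in ℝ^d, each sampled uniformly from the set of k-sparse vectors with nonzero entries in {±1/√(k+1)} (i.e., uniformly random support of size k, i.i.d. random signs, entries of magnitude 1/√(k+1)). Then there exists an absolute constant C > 0 such that for every positive integer ℓ, E[⟨x⁽¹⁾, x⁽²⁾⟩^{2ℓ}] ≤ (Cℓ)^ℓ · (1/d + ℓ/k²)^ℓ. -/

import Mathlib

open Finset


/-- `2^u * u! ≤ (2u)!` -/
lemma aux_two_pow_fact (u : ℕ) : 2 ^ u * u.factorial ≤ (2 * u).factorial := by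
  induction u with
  | zero => simp
  | succ n ih =>
    have h1 : 2 * (n + 1) = (2 * n + 1) + 1 := by ring
    rw [h1, Nat.factorial_succ, Nat.factorial_succ]
    calc 2 ^ (n+1) * ((n+1) * n.factorial)
        = (n+1) * 2 * (2 ^ n * n.factorial) := by ring
      _ ≤ (2*n+1) * (2*n+1+1) * (2*n).factorial := by
          apply Nat.mul_le_mul
          · apply Nat.mul_le_mul <;> omega
          · exact ih
      _ = (2*n+1+1) * ((2*n+1) * (2*n).factorial) := by ring
    
/-- `(2m)! ≤ (4m)^m * m!` -/
lemma aux_fact_le (m : ℕ) : (2*m).factorial ≤ (4*m)^m * m.factorial := by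
  induction m with
  | zero => simp
  | succ n ih =>
    have h1 : 2 * (n + 1) = (2 * n + 1) + 1 := by ring
    rw [h1, Nat.factorial_succ, Nat.factorial_succ]
    calc (2*n+1+1) * ((2*n+1) * (2*n).factorial)
        ≤ (2*n+2) * ((2*n+2) * ((4*n)^n * n.factorial)) := by
          apply Nat.mul_le_mul_left
          apply Nat.mul_le_mul (by omega) ih
      _ = (2*n+2)*(2*n+2) * (4*n)^n * n.factorial := by ring
      _ ≤ (4*(n+1)) * ((4*(n+1))^n * (4*(n+1))^0 * ((n+1) * n.factorial)) := by
          have h2 : (2*n+2)*(2*n+2) ≤ (4*(n+1)) * (n+1) := by ring_nf; omega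
          have h3 : (4*n)^n ≤ (4*(n+1))^n := Nat.pow_le_pow_left (by omega) n
          calc (2*n+2)*(2*n+2) * (4*n)^n * n.factorial
              ≤ (4*(n+1)) * (n+1) * (4*(n+1))^n * n.factorial := by
                exact Nat.mul_le_mul_right _ (Nat.mul_le_mul h2 h3)
            _ = (4*(n+1)) * ((4*(n+1))^n * (4*(n+1))^0 * ((n+1) * n.factorial)) := by ring
      _ ≤ (4*(n+1))^(n+1) * ((n+1) * n.factorial) := by
          rw [pow_succ]
          calc (4*(n+1)) * ((4*(n+1))^n * (4*(n+1))^0 * ((n+1) * n.factorial))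
              = (4*(n+1))^n * (4*(n+1)) * ((n+1)*n.factorial) := by ring
            _ ≤ (4*(n+1))^n * (4*(n+1)) * ((n+1)*n.factorial) := le_refl _


noncomputable def Dr (m : ℕ) : ℝ := (2*m).factorial / (2^m * m.factorial)

lemma Dr_nonneg (m : ℕ) : 0 ≤ Dr m := by
  unfold Dr; positivity

lemma Dr_zero : Dr 0 = 1 := by simp [Dr]

lemma Dr_le (m : ℕ) : Dr m ≤ (2*m)^m := by
  unfold Dr
  rw [div_le_iff₀ (by positivity)]
  calc ((2*m).factorial : ℝ) ≤ ((4*m)^m * m.factorial : ℕ) := by exact_mod_cast aux_fact_le m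
    _ = ((4:ℝ))^m * m^m * m.factorial := by push_cast; rw [mul_pow]
    _ = (2*m:ℝ)^m * (2^m * m.factorial) := by
        rw [mul_pow, show (4:ℝ)^m = 2^m*2^m by rw [← mul_pow]; norm_num]; ring

/-- key combinatorial inequality -/
lemma aux_L3 (u v : ℕ) :
    ((2*(u+v)).choose (2*u) : ℝ) * Dr v ≤ Dr (u+v) * ((u+v).choose u) := by
  have hsym : ∀ a b : ℕ, (a+b).choose b = (a+b).choose a := by
    intro a b
    have := Nat.choose_symm (Nat.le_add_left b a)
    simpa using this.symm
  have e1 : (u+v).factorial = (u+v).choose u * u.factorial * v.factorial := by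
    rw [← hsym u v]
    exact (Nat.add_choose_mul_factorial_mul_factorial u v).symm
  have e2 : (2*(u+v)).factorial
      = (2*(u+v)).choose (2*u) * (2*u).factorial * (2*v).factorial := by
    have h : 2*(u+v) = 2*u + 2*v := by ring
    rw [h, ← hsym (2*u) (2*v)]
    exact (Nat.add_choose_mul_factorial_mul_factorial (2*u) (2*v)).symm
  have hn : (2*(u+v)).choose (2*u) * (2*v).factorial * (2^(u+v) * (u+v).factorial)
      ≤ (2*(u+v)).factorial * ((u+v).choose u) * (2^v * v.factorial) := by
    calc (2*(u+v)).choose (2*u) * (2*v).factorial * (2^(u+v) * (u+v).factorial)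
        = ((u+v).choose u * (2^v * v.factorial) * ((2*(u+v)).choose (2*u) * (2*v).factorial))
            * (2^u * u.factorial) := by rw [e1, pow_add]; ring
      _ ≤ ((u+v).choose u * (2^v * v.factorial) * ((2*(u+v)).choose (2*u) * (2*v).factorial))
            * (2*u).factorial := mul_le_mul_right (aux_two_pow_fact u) _
      _ = (2*(u+v)).factorial * ((u+v).choose u) * (2^v * v.factorial) := by rw [e2]; ring
  unfold Dr
  rw [mul_div_assoc', div_mul_eq_mul_div, div_le_div_iff₀ (by positivity) (by positivity)]
  calc ((2*(u+v)).choose (2*u) : ℝ) * (2*v).factorial * (2^(u+v) * (u+v).factorial)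
      = (((2*(u+v)).choose (2*u) * (2*v).factorial * (2^(u+v) * (u+v).factorial) : ℕ) : ℝ) := by
        push_cast; ring
    _ ≤ (((2*(u+v)).factorial * ((u+v).choose u) * (2^v * v.factorial) : ℕ) : ℝ) := by
        exact_mod_cast hn
    _ = ((2*(u+v)).factorial : ℝ) * ((u+v).choose u) * (2^v * v.factorial) := by push_cast; ring


def eps (b : Bool) : ℝ := if b then 1 else -1

lemma eps_sq (b : Bool) : eps b ^ 2 = 1 := by cases b <;> simp [eps]

lemma eps_pow_even {j : ℕ} (hj : Even j) (b : Bool) : eps b ^ j = 1 := by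
  obtain ⟨t, rfl⟩ := hj
  rw [show t + t = 2*t by ring, pow_mul, eps_sq, one_pow]

lemma eps_not (b : Bool) : eps (!b) = - eps b := by cases b <;> simp [eps]

lemma radA (d : ℕ) (S : Finset (Fin d)) (m : ℕ) :
    ∑ σ : Fin d → Bool, (∑ i ∈ S, eps (σ i))^(2*m) ≤ 2^d * Dr m * (S.card : ℝ)^m := by
  induction S using Finset.induction_on generalizing m with
  | empty =>
    cases m with
    | zero => simp [Dr_zero]
    | succ m =>
      simp only [Finset.sum_empty, Finset.card_empty, Nat.cast_zero]
      rw [zero_pow (by omega), zero_pow (by omega), mul_zero]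
      exact Finset.sum_nonpos fun σ _ => le_refl 0
  | insert a s ha ih =>
    have hsplit : ∀ σ : Fin d → Bool,
        ∑ i ∈ insert a s, eps (σ i) = eps (σ a) + ∑ i ∈ s, eps (σ i) :=
      fun σ => Finset.sum_insert ha
    set n := s.card with hn
    have step1 : ∑ σ : Fin d → Bool, (∑ i ∈ insert a s, eps (σ i))^(2*m)
        = ∑ j ∈ Finset.range (2*m+1),
            (∑ σ : Fin d → Bool, eps (σ a)^j * (∑ i ∈ s, eps (σ i))^(2*m-j))
              * ((2*m).choose j) := by
      simp_rw [hsplit, add_pow]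
      rw [Finset.sum_comm]
      exact Finset.sum_congr rfl fun j _ => (Finset.sum_mul _ _ _).symm
    have step2 : ∀ p j : ℕ, ¬ Even j →
        ∑ σ : Fin d → Bool, eps (σ a)^j * (∑ i ∈ s, eps (σ i))^p = 0 := by
      intro p j hj
      apply Finset.sum_ninvolution (fun σ => Function.update σ a (!(σ a)))
      · intro σ
        have hXa : ∑ i ∈ s, eps ((Function.update σ a (!(σ a))) i)
            = ∑ i ∈ s, eps (σ i) := by
          apply Finset.sum_congr rfl
          intro i hi
          have : i ≠ a := fun h => ha (h ▸ hi)
          rw [Function.update_of_ne this]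
        rw [hXa, Function.update_self, eps_not,
          (Nat.not_even_iff_odd.mp hj).neg_pow]
        ring
      · intro σ _
        intro h
        have := congrFun h a
        rw [Function.update_self] at this
        cases σ a <;> simp_all
      · intro σ; exact Finset.mem_univ _
      · intro σ
        funext i
        by_cases hia : i = a
        · subst hia; simp
        · simp [Function.update_of_ne hia]
    have step2' : ∀ j : ℕ, Even j →
        ∑ σ : Fin d → Bool, eps (σ a)^j * (∑ i ∈ s, eps (σ i))^(2*m-j)
          = ∑ σ : Fin d → Bool, (∑ i ∈ s, eps (σ i))^(2*m-j) := by
      intro j hj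
      exact Finset.sum_congr rfl fun σ _ => by rw [eps_pow_even hj, one_mul]
    have step3 : ∑ j ∈ Finset.range (2*m+1),
            (∑ σ : Fin d → Bool, eps (σ a)^j * (∑ i ∈ s, eps (σ i))^(2*m-j))
              * ((2*m).choose j)
        = ∑ u ∈ Finset.range (m+1),
            (∑ σ : Fin d → Bool, (∑ i ∈ s, eps (σ i))^(2*(m-u)))
              * ((2*m).choose (2*u)) := by
      rw [← Finset.sum_filter_of_ne
        (p := fun j => Even j) (by
          intro j _ hne
          by_contra hj
          exact hne (by rw [step2 _ _ hj, zero_mul]))]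
      apply Finset.sum_nbij' (i := fun j => j / 2) (j := fun u => 2 * u)
      · intro j hj
        simp only [Finset.mem_filter, Finset.mem_range] at hj
        simp only [Finset.mem_range]
        omega
      · intro u hu
        simp only [Finset.mem_range] at hu
        simp only [Finset.mem_filter, Finset.mem_range]
        constructor
        · omega
        · exact even_two_mul u
      · intro j hj
        simp only [Finset.mem_filter, Finset.mem_range] at hj
        have := hj.2
        rw [Nat.even_iff] at this
        omega
      · intro u hu; omega
      · intro j hj
        simp only [Finset.mem_filter, Finset.mem_range] at hj
        have hev : Even j := hj.2
        rw [step2' j hev]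
        have h1 : 2 * (j / 2) = j := by rw [Nat.even_iff] at hev; omega
        have h2 : 2 * (m - j/2) = 2*m - j := by omega
        rw [h1, h2]
    rw [step1, step3]
    have hcard : ((insert a s).card : ℝ) = (n : ℝ) + 1 := by
      rw [Finset.card_insert_of_notMem ha]; push_cast; ring
    rw [hcard]
    calc ∑ u ∈ Finset.range (m+1),
            (∑ σ : Fin d → Bool, (∑ i ∈ s, eps (σ i))^(2*(m-u)))
              * ((2*m).choose (2*u))
        ≤ ∑ u ∈ Finset.range (m+1),
            (2^d * Dr (m-u) * (n:ℝ)^(m-u)) * ((2*m).choose (2*u)) := by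
          apply Finset.sum_le_sum
          intro u _
          exact mul_le_mul_of_nonneg_right (ih (m-u)) (Nat.cast_nonneg _)
      _ ≤ ∑ u ∈ Finset.range (m+1),
            2^d * (Dr m * ((m).choose u)) * (n:ℝ)^(m-u) := by
          apply Finset.sum_le_sum
          intro u hu
          have hum : u ≤ m := by
            simp only [Finset.mem_range] at hu; omega
          have h3 := aux_L3 u (m-u)
          rw [Nat.add_sub_cancel' hum] at h3
          calc (2^d * Dr (m-u) * (n:ℝ)^(m-u)) * ((2*m).choose (2*u))
              = 2^d * (((2*m).choose (2*u) : ℝ) * Dr (m-u)) * (n:ℝ)^(m-u) := by ring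
            _ ≤ 2^d * (Dr m * ((m).choose u)) * (n:ℝ)^(m-u) := by
                apply mul_le_mul_of_nonneg_right _ (by positivity)
                apply mul_le_mul_of_nonneg_left h3 (by positivity)
      _ = 2^d * Dr m * ((n:ℝ) + 1)^m := by
          rw [show ((n:ℝ)+1)^m = (1+(n:ℝ))^m by ring_nf, add_pow]
          rw [Finset.mul_sum]
          apply Finset.sum_congr rfl
          intro u _
          rw [one_pow]
          ring


lemma eps_mul (b c : Bool) : eps b * eps c = eps (b == c) := by
  cases b <;> cases c <;> simp [eps]

lemma radB (d p : ℕ) (S : Finset (Fin d)) :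
    ∑ σ₁ : Fin d → Bool, ∑ σ₂ : Fin d → Bool,
      (∑ i ∈ S, eps (σ₁ i) * eps (σ₂ i))^p
    = 2^d * ∑ τ : Fin d → Bool, (∑ i ∈ S, eps (τ i))^p := by
  rw [Finset.sum_comm]
  have hinner : ∀ σ₂ : Fin d → Bool,
      ∑ σ₁ : Fin d → Bool, (∑ i ∈ S, eps (σ₁ i) * eps (σ₂ i))^p
      = ∑ τ : Fin d → Bool, (∑ i ∈ S, eps (τ i))^p := by
    intro σ₂
    have hbij : Function.Bijective (fun (σ : Fin d → Bool) => fun i => σ i == σ₂ i) := by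
      apply Function.Involutive.bijective
      intro σ
      funext i
      simp only
      cases σ i <;> cases σ₂ i <;> rfl
    apply Fintype.sum_bijective _ hbij
    intro σ
    simp_rw [eps_mul]
  rw [Finset.sum_congr rfl fun σ₂ _ => hinner σ₂, Finset.sum_const]
  simp [card_univ, mul_comm]


/-- ratio bound: C(d-r, k-r) * d^r ≤ C(d,k) * k^r for r ≤ k ≤ d -/
lemma aux_C2a (d k : ℕ) (hkd : k ≤ d) : ∀ r, r ≤ k →
    (d-r).choose (k-r) * d^r ≤ d.choose k * k^r := by
  intro r
  induction r with
  | zero => simp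
  | succ r ih =>
    intro hrk
    have hr : r ≤ k := by omega
    have ihr := ih hr
    -- key step: C(d-r-1, k-r-1) * d ≤ C(d-r, k-r) * k
    have hstep : (d-(r+1)).choose (k-(r+1)) * d ≤ (d-r).choose (k-r) * k := by
      set a := d - r with hadef
      set b := k - r with hbdef
      have hb1 : 1 ≤ b := by omega
      have ha1 : 1 ≤ a := by omega
      have hba : b ≤ a := by omega
      have hid : a * ((a-1).choose (b-1)) = a.choose b * b := by
        have := Nat.add_one_mul_choose_eq (a-1) (b-1)
        have h1 : a-1+1 = a := by omega
        have h2 : b-1+1 = b := by omega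
        rw [h1, h2] at this
        exact this
      have hsub1 : d - (r+1) = a - 1 := by omega
      have hsub2 : k - (r+1) = b - 1 := by omega
      rw [hsub1, hsub2]
      have hmul : (a-1).choose (b-1) * d * a ≤ a.choose b * k * a := by
        calc (a-1).choose (b-1) * d * a = (a * ((a-1).choose (b-1))) * d := by ring
          _ = (a.choose b * b) * d := by rw [hid]
          _ = a.choose b * (b * d) := by ring
          _ ≤ a.choose b * (k * a) := by
              apply Nat.mul_le_mul_left
              -- (k-r)*d ≤ k*(d-r)  ⟺  k*r ≤ r*d
              calc b * d = k*d - r*d := by rw [hbdef, Nat.sub_mul]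
                _ ≤ k*d - k*r := by
                    apply Nat.sub_le_sub_left
                    calc k*r = r*k := by ring
                      _ ≤ r*d := Nat.mul_le_mul_left r hkd
                _ = k * a := by rw [hadef, Nat.mul_sub]
          _ = a.choose b * k * a := by ring
      exact Nat.le_of_mul_le_mul_right hmul (by omega)
    calc (d-(r+1)).choose (k-(r+1)) * d^(r+1)
        = ((d-(r+1)).choose (k-(r+1)) * d) * d^r := by ring
      _ ≤ ((d-r).choose (k-r) * k) * d^r := Nat.mul_le_mul_right _ hstep
      _ = ((d-r).choose (k-r) * d^r) * k := by ring
      _ ≤ (d.choose k * k^r) * k := Nat.mul_le_mul_right _ ihr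
      _ = d.choose k * k^(r+1) := by ring

/-- number of k-subsets containing a fixed r-subset -/
lemma aux_C2b (d k : ℕ) (R : Finset (Fin d)) (hRk : R.card ≤ k) :
    ((univ : Finset (Fin d)).powersetCard k |>.filter (fun T => R ⊆ T)).card
      = (d - R.card).choose (k - R.card) := by
  have hc : (d - R.card) = Rᶜ.card := by rw [Finset.card_compl]; simp
  rw [hc, ← Finset.card_powersetCard (k - R.card) Rᶜ]
  apply Finset.card_bij' (fun T _ => T \ R) (fun U _ => U ∪ R)
  · intro T hT
    simp only [Finset.mem_filter, Finset.mem_powersetCard] at hT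
    obtain ⟨⟨_, hTcard⟩, hRT⟩ := hT
    rw [Finset.mem_powersetCard]
    constructor
    · intro x hx
      simp only [Finset.mem_sdiff] at hx
      simp [Finset.mem_compl, hx.2]
    · rw [Finset.card_sdiff_of_subset hRT, hTcard]
  · intro U hU
    rw [Finset.mem_powersetCard] at hU
    obtain ⟨hUc, hUcard⟩ := hU
    simp only [Finset.mem_filter, Finset.mem_powersetCard]
    have hdisj : Disjoint U R := by
      rw [Finset.disjoint_right]
      intro x hxR hxU
      have := hUc hxU
      simp [Finset.mem_compl] at this
      exact this hxR
    refine ⟨⟨Finset.subset_univ _, ?_⟩, Finset.subset_union_right⟩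
    rw [Finset.card_union_of_disjoint hdisj, hUcard]
    omega
  · intro T hT
    simp only [Finset.mem_filter] at hT
    exact Finset.sdiff_union_of_subset hT.2
  · intro U hU
    rw [Finset.mem_powersetCard] at hU
    apply Finset.union_sdiff_cancel_right
    rw [Finset.disjoint_right]
    intro x hxR hxU
    have := hU.1 hxU
    simp [Finset.mem_compl] at this
    exact this hxR


lemma aux_rr (r : ℕ) : (r:ℝ)^r ≤ Real.exp 1 ^ r * r.factorial := by
  induction r with
  | zero => simp
  | succ r ih =>
    have key : ((r:ℝ)+1)^r ≤ Real.exp 1 * (r:ℝ)^r := by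
      rcases Nat.eq_zero_or_pos r with hr | hr
      · subst hr; simpa using Real.one_le_exp (by norm_num)
      · have hrpos : (0:ℝ) < r := by exact_mod_cast hr
        have h1 : (r:ℝ) + 1 = (1 + 1/(r:ℝ)) * r := by field_simp
        have h2 : (1 + 1/(r:ℝ)) ≤ Real.exp (1/(r:ℝ)) := by
          have := Real.add_one_le_exp (1/(r:ℝ))
          linarith
        calc ((r:ℝ)+1)^r = (1 + 1/(r:ℝ))^r * (r:ℝ)^r := by rw [h1, mul_pow]
          _ ≤ Real.exp (1/(r:ℝ))^r * (r:ℝ)^r := by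
              apply mul_le_mul_of_nonneg_right _ (by positivity)
              exact pow_le_pow_left₀ (by positivity) h2 r
          _ = Real.exp 1 * (r:ℝ)^r := by
              rw [← Real.exp_nat_mul]
              congr 1
              field_simp
    push_cast
    calc ((r:ℝ)+1)^(r+1) = ((r:ℝ)+1) * ((r:ℝ)+1)^r := by rw [pow_succ]; ring
      _ ≤ ((r:ℝ)+1) * (Real.exp 1 * (r:ℝ)^r) := by
          apply mul_le_mul_of_nonneg_left key (by positivity)
      _ ≤ ((r:ℝ)+1) * (Real.exp 1 * (Real.exp 1 ^ r * r.factorial)) := by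
          apply mul_le_mul_of_nonneg_left _ (by positivity)
          exact mul_le_mul_of_nonneg_left ih (Real.exp_pos 1).le
      _ = Real.exp 1 ^ (r+1) * ((r+1) * r.factorial) := by rw [pow_succ]; ring
      _ = Real.exp 1 ^ (r+1) * (r+1).factorial := by
          rw [Nat.factorial_succ]; push_cast; ring

lemma aux_C4 (d k ℓ r : ℕ) (hk : 0 < k) (hkd : k ≤ d) (hr1 : 1 ≤ r) (hrl : r ≤ ℓ) :
    (d.choose r : ℝ) * (r:ℝ)^ℓ * ((k:ℝ)/d)^(2*r)
      ≤ Real.exp 1 ^ ℓ * ((k:ℝ)^2/d + ℓ)^ℓ := by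
  have hd : (0:ℝ) < d := by exact_mod_cast Nat.lt_of_lt_of_le hk hkd
  set A : ℝ := (k:ℝ)^2/d + ℓ with hA
  have hq : (0:ℝ) < (k:ℝ)^2/d := by positivity
  have hl0 : (0:ℝ) ≤ ℓ := by positivity
  have hApos : 0 < A := by rw [hA]; linarith
  have ha1 : (k:ℝ)^2/d ≤ A := by rw [hA]; linarith
  have ha2 : (ℓ:ℝ) ≤ A := by rw [hA]; linarith
  have h1 : (d.choose r : ℝ) ≤ (d:ℝ)^r / r.factorial := Nat.choose_le_pow_div r d
  have h2 : (r:ℝ)^ℓ = (r:ℝ)^r * (r:ℝ)^(ℓ-r) := by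
    rw [← pow_add]; congr 1; omega
  have h4 : (r:ℝ)^(ℓ-r) ≤ (ℓ:ℝ)^(ℓ-r) := by
    apply pow_le_pow_left₀ (by positivity)
    exact_mod_cast hrl
  have hfact : (0:ℝ) < r.factorial := by exact_mod_cast r.factorial_pos
  have hkey : (d:ℝ)^r * ((k:ℝ)/d)^(2*r) = ((k:ℝ)^2/d)^r := by
    have hdd : (d:ℝ)^(2*r) = (d:ℝ)^r * (d:ℝ)^r := by rw [two_mul, pow_add]
    rw [div_pow, div_pow, ← pow_mul, hdd, mul_div_assoc']
    exact mul_div_mul_left _ _ (by positivity)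
  calc (d.choose r : ℝ) * (r:ℝ)^ℓ * ((k:ℝ)/d)^(2*r)
      ≤ ((d:ℝ)^r / r.factorial) * ((r:ℝ)^r * (ℓ:ℝ)^(ℓ-r)) * ((k:ℝ)/d)^(2*r) := by
        apply mul_le_mul_of_nonneg_right _ (by positivity)
        rw [h2]
        apply mul_le_mul h1 (mul_le_mul_of_nonneg_left h4 (by positivity)) (by positivity)
          (by positivity)
    _ ≤ ((d:ℝ)^r / r.factorial) * ((Real.exp 1 ^ r * r.factorial) * (ℓ:ℝ)^(ℓ-r))
          * ((k:ℝ)/d)^(2*r) := by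
        apply mul_le_mul_of_nonneg_right _ (by positivity)
        apply mul_le_mul_of_nonneg_left _ (by positivity)
        exact mul_le_mul_of_nonneg_right (aux_rr r) (by positivity)
    _ = Real.exp 1 ^ r * (ℓ:ℝ)^(ℓ-r) * ((d:ℝ)^r * ((k:ℝ)/d)^(2*r)) := by
        field_simp
    _ = Real.exp 1 ^ r * (ℓ:ℝ)^(ℓ-r) * ((k:ℝ)^2/d)^r := by rw [hkey]
    _ ≤ Real.exp 1 ^ ℓ * (A^(ℓ-r) * A^r) := by
        have e1 : Real.exp 1 ^ r ≤ Real.exp 1 ^ ℓ :=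
          pow_le_pow_right₀ (Real.one_le_exp (by norm_num)) hrl
        have e2 : (ℓ:ℝ)^(ℓ-r) ≤ A^(ℓ-r) := pow_le_pow_left₀ (by positivity) ha2 _
        have e3 : ((k:ℝ)^2/d)^r ≤ A^r := pow_le_pow_left₀ (by positivity) ha1 _
        calc Real.exp 1 ^ r * (ℓ:ℝ)^(ℓ-r) * ((k:ℝ)^2/d)^r
            ≤ Real.exp 1 ^ ℓ * A^(ℓ-r) * A^r := by
              apply mul_le_mul _ e3 (by positivity) (by positivity)
              apply mul_le_mul e1 e2 (by positivity) (by positivity)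
          _ = Real.exp 1 ^ ℓ * (A^(ℓ-r) * A^r) := by ring
    _ = Real.exp 1 ^ ℓ * A^ℓ := by
        rw [← pow_add]
        congr 2
        omega


/-- indicator -/
noncomputable def chi {d : ℕ} (T : Finset (Fin d)) (i : Fin d) : ℝ := if i ∈ T then 1 else 0

lemma chi_prod {d ℓ : ℕ} (T : Finset (Fin d)) (f : Fin ℓ → Fin d) :
    ∏ j, chi T (f j) = if (Finset.image f univ ⊆ T) then (1:ℝ) else 0 := by
  by_cases h : Finset.image f univ ⊆ T
  · rw [if_pos h]
    apply Finset.prod_eq_one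
    intro j _
    have : f j ∈ T := h (Finset.mem_image_of_mem f (Finset.mem_univ j))
    simp [chi, this]
  · rw [if_neg h]
    rw [Finset.image_subset_iff] at h
    push_neg at h
    obtain ⟨j, _, hj⟩ := h
    exact Finset.prod_eq_zero (Finset.mem_univ j) (by simp [chi, hj])

lemma card_inter_pow {d ℓ : ℕ} (T₁ T₂ : Finset (Fin d)) :
    ((T₁ ∩ T₂).card : ℝ)^ℓ
      = ∑ f : Fin ℓ → Fin d, (∏ j, chi T₁ (f j)) * (∏ j, chi T₂ (f j)) := by
  have h1 : ((T₁ ∩ T₂).card : ℝ) = ∑ i : Fin d, chi T₁ i * chi T₂ i := by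
    have : ∀ i : Fin d, chi T₁ i * chi T₂ i = if i ∈ T₁ ∩ T₂ then (1:ℝ) else 0 := by
      intro i
      by_cases h₁ : i ∈ T₁ <;> by_cases h₂ : i ∈ T₂ <;>
        simp [chi, h₁, h₂, Finset.mem_inter]
    simp_rw [this]
    rw [Finset.sum_ite_mem, Finset.univ_inter, Finset.sum_const]
    simp
  rw [h1, Finset.sum_pow']
  rw [show (Fintype.piFinset fun _ : Fin ℓ => (univ : Finset (Fin d)))
    = (univ : Finset (Fin ℓ → Fin d)) from Fintype.piFinset_univ]
  apply Finset.sum_congr rfl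
  intro f _
  rw [← Finset.prod_mul_distrib]

lemma fiber_count {d ℓ : ℕ} (r : ℕ) :
    ((univ : Finset (Fin ℓ → Fin d)).filter
        (fun f => (Finset.image f univ).card = r)).card ≤ d.choose r * r^ℓ := by
  have hsub : ((univ : Finset (Fin ℓ → Fin d)).filter
        (fun f => (Finset.image f univ).card = r))
      ⊆ ((univ : Finset (Fin d)).powersetCard r).biUnion
          (fun R => Fintype.piFinset (fun _ : Fin ℓ => R)) := by
    intro f hf
    simp only [Finset.mem_filter] at hf
    rw [Finset.mem_biUnion]
    refine ⟨Finset.image f univ, ?_, ?_⟩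
    · rw [Finset.mem_powersetCard]
      exact ⟨Finset.subset_univ _, hf.2⟩
    · rw [Fintype.mem_piFinset]
      intro j
      exact Finset.mem_image_of_mem f (Finset.mem_univ j)
  calc ((univ : Finset (Fin ℓ → Fin d)).filter
        (fun f => (Finset.image f univ).card = r)).card
      ≤ (((univ : Finset (Fin d)).powersetCard r).biUnion
          (fun R => Fintype.piFinset (fun _ : Fin ℓ => R))).card :=
        Finset.card_le_card hsub
    _ ≤ ∑ R ∈ (univ : Finset (Fin d)).powersetCard r,
          (Fintype.piFinset (fun _ : Fin ℓ => R)).card := Finset.card_biUnion_le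
    _ ≤ ∑ R ∈ (univ : Finset (Fin d)).powersetCard r, r^ℓ := by
        apply Finset.sum_le_sum
        intro R hR
        rw [Finset.mem_powersetCard] at hR
        rw [Fintype.card_piFinset]
        simp [hR.2]
    _ = d.choose r * r^ℓ := by
        rw [Finset.sum_const, Finset.card_powersetCard, Finset.card_univ, Fintype.card_fin,
          smul_eq_mul]

lemma stepC (d k ℓ : ℕ) (hk : 0 < k) (hkd : k ≤ d) (hl : 0 < ℓ) :
    ∑ T₁ ∈ (univ : Finset (Fin d)).powersetCard k,
      ∑ T₂ ∈ (univ : Finset (Fin d)).powersetCard k, ((T₁ ∩ T₂).card : ℝ)^ℓ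
    ≤ (d.choose k : ℝ)^2 * ((ℓ:ℝ) * Real.exp 1 ^ ℓ * ((k:ℝ)^2/d + ℓ)^ℓ) := by
  have hd : 0 < d := Nat.lt_of_lt_of_le hk hkd
  have hdR : (0:ℝ) < d := by exact_mod_cast hd
  set P := (univ : Finset (Fin d)).powersetCard k with hP
  set N : (Fin ℓ → Fin d) → ℝ := fun f => ∑ T ∈ P, ∏ j, chi T (f j) with hN
  -- swap sums
  have hswap : ∑ T₁ ∈ P, ∑ T₂ ∈ P, ((T₁ ∩ T₂).card : ℝ)^ℓ
      = ∑ f : Fin ℓ → Fin d, (N f) * (N f) := by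
    simp_rw [card_inter_pow]
    calc ∑ T₁ ∈ P, ∑ T₂ ∈ P, ∑ f : Fin ℓ → Fin d,
            (∏ j, chi T₁ (f j)) * (∏ j, chi T₂ (f j))
        = ∑ T₁ ∈ P, ∑ f : Fin ℓ → Fin d, (∏ j, chi T₁ (f j)) * N f := by
          refine Finset.sum_congr rfl fun T₁ _ => ?_
          rw [Finset.sum_comm]
          refine Finset.sum_congr rfl fun f _ => ?_
          rw [hN]
          simp only
          rw [Finset.mul_sum]
      _ = ∑ f : Fin ℓ → Fin d, (N f) * (N f) := by
          rw [Finset.sum_comm]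
          refine Finset.sum_congr rfl fun f _ => ?_
          rw [← Finset.sum_mul]
  -- bound N f
  have hNcard : ∀ f : Fin ℓ → Fin d,
      N f = ((P.filter (fun T => Finset.image f univ ⊆ T)).card : ℝ) := by
    intro f
    rw [hN]
    simp only
    rw [Finset.sum_congr rfl fun T _ => chi_prod T f, Finset.sum_boole]
  have hNbound : ∀ f : Fin ℓ → Fin d,
      N f ≤ (d.choose k : ℝ) * ((k:ℝ)/d)^((Finset.image f univ).card) := by
    intro f
    set R := Finset.image f univ with hR
    set r := R.card with hr
    rw [hNcard f]
    by_cases hcase : r ≤ k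
    · have hcount := aux_C2b d k R hcase
      have hratio := aux_C2a d k hkd r hcase
      rw [← hr] at hcount
      have hnat : (P.filter (fun T => R ⊆ T)).card * d^r ≤ d.choose k * k^r := by
        rw [hP, hcount]
        exact hratio
      have hreal : ((P.filter (fun T => R ⊆ T)).card : ℝ) * (d:ℝ)^r
          ≤ (d.choose k : ℝ) * (k:ℝ)^r := by exact_mod_cast hnat
      rw [div_pow, ← mul_div_assoc, le_div_iff₀ (by positivity)]
      exact hreal
    · have hempty : (P.filter (fun T => R ⊆ T)).card = 0 := by
        rw [Finset.card_eq_zero, Finset.filter_eq_empty_iff]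
        intro T hT
        rw [hP, Finset.mem_powersetCard] at hT
        intro hsub
        exact hcase (hT.2 ▸ Finset.card_le_card hsub)
      rw [hempty, Nat.cast_zero]
      positivity
  have hNnonneg : ∀ f : Fin ℓ → Fin d, 0 ≤ N f := by
    intro f
    rw [hNcard f]
    positivity
  set q : ℝ := ((k:ℝ)/d)^2 with hq
  have hq0 : 0 ≤ q := by positivity
  have hsq : ∀ f : Fin ℓ → Fin d,
      N f * N f ≤ (d.choose k : ℝ)^2 * q^((Finset.image f univ).card) := by
    intro f
    calc N f * N f ≤ ((d.choose k : ℝ) * ((k:ℝ)/d)^((Finset.image f univ).card))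
          * ((d.choose k : ℝ) * ((k:ℝ)/d)^((Finset.image f univ).card)) :=
        mul_le_mul (hNbound f) (hNbound f) (hNnonneg f) (by positivity)
      _ = (d.choose k : ℝ)^2 * q^((Finset.image f univ).card) := by
          rw [hq]
          ring
  rw [hswap]
  calc ∑ f : Fin ℓ → Fin d, N f * N f
      ≤ ∑ f : Fin ℓ → Fin d, (d.choose k : ℝ)^2 * q^((Finset.image f univ).card) :=
        Finset.sum_le_sum fun f _ => hsq f
    _ = (d.choose k : ℝ)^2 * ∑ f : Fin ℓ → Fin d, q^((Finset.image f univ).card) := by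
        rw [Finset.mul_sum]
    _ ≤ (d.choose k : ℝ)^2 * ((ℓ:ℝ) * Real.exp 1 ^ ℓ * ((k:ℝ)^2/d + ℓ)^ℓ) := by
        apply mul_le_mul_of_nonneg_left _ (by positivity)
        -- fiberwise decomposition
        set φ : (Fin ℓ → Fin d) → ℕ := fun f => (Finset.image f univ).card with hφ
        have hcomp : ∑ f : Fin ℓ → Fin d, q^(φ f)
            = ∑ r ∈ (univ : Finset (Fin ℓ → Fin d)).image φ,
                ((univ : Finset (Fin ℓ → Fin d)).filter (fun f => φ f = r)).card • q^r :=
          Finset.sum_comp (fun r => q^r) φ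
        rw [hcomp]
        have hM : ∀ r ∈ (univ : Finset (Fin ℓ → Fin d)).image φ,
            ((univ : Finset (Fin ℓ → Fin d)).filter (fun f => φ f = r)).card • q^r
              ≤ Real.exp 1 ^ ℓ * ((k:ℝ)^2/d + ℓ)^ℓ := by
          intro r hrmem
          obtain ⟨f, _, hfr⟩ := Finset.mem_image.mp hrmem
          have hr1 : 1 ≤ r := by
            rw [← hfr, hφ]
            have : (Finset.image f univ).Nonempty := by
              apply Finset.Nonempty.image
              exact ⟨⟨0, hl⟩, Finset.mem_univ _⟩
            exact Finset.card_pos.mpr this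
          have hrl : r ≤ ℓ := by
            rw [← hfr, hφ]
            calc (Finset.image f univ).card ≤ (univ : Finset (Fin ℓ)).card :=
                Finset.card_image_le
              _ = ℓ := by simp
          calc ((univ : Finset (Fin ℓ → Fin d)).filter (fun f => φ f = r)).card • q^r
              ≤ (d.choose r * r^ℓ : ℕ) • q^r := by
                rw [nsmul_eq_mul, nsmul_eq_mul]
                apply mul_le_mul_of_nonneg_right _ (by positivity)
                have hfc := fiber_count (d := d) (ℓ := ℓ) r
                exact_mod_cast hfc
            _ = (d.choose r : ℝ) * (r:ℝ)^ℓ * ((k:ℝ)/d)^(2*r) := by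
                simp only [nsmul_eq_mul, hq]
                rw [← pow_mul]
                push_cast
                ring
            _ ≤ Real.exp 1 ^ ℓ * ((k:ℝ)^2/d + ℓ)^ℓ := aux_C4 d k ℓ r hk hkd hr1 hrl
        calc ∑ r ∈ (univ : Finset (Fin ℓ → Fin d)).image φ,
              ((univ : Finset (Fin ℓ → Fin d)).filter (fun f => φ f = r)).card • q^r
            ≤ ((univ : Finset (Fin ℓ → Fin d)).image φ).card
                • (Real.exp 1 ^ ℓ * ((k:ℝ)^2/d + ℓ)^ℓ) :=
              Finset.sum_le_card_nsmul _ _ _ hM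
          _ ≤ (ℓ:ℝ) * (Real.exp 1 ^ ℓ * ((k:ℝ)^2/d + ℓ)^ℓ) := by
              rw [nsmul_eq_mul]
              apply mul_le_mul_of_nonneg_right _ (by positivity)
              have himg : (univ : Finset (Fin ℓ → Fin d)).image φ ⊆ Finset.Icc 1 ℓ := by
                intro r hrmem
                obtain ⟨f, _, hfr⟩ := Finset.mem_image.mp hrmem
                rw [Finset.mem_Icc]
                constructor
                · rw [← hfr, hφ]
                  apply Finset.card_pos.mpr
                  exact Finset.Nonempty.image ⟨⟨0, hl⟩, Finset.mem_univ _⟩ f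
                · rw [← hfr, hφ]
                  calc (Finset.image f univ).card ≤ (univ : Finset (Fin ℓ)).card :=
                      Finset.card_image_le
                    _ = ℓ := by simp
              have := Finset.card_le_card himg
              rw [Nat.card_Icc] at this
              have h2 : (univ.image φ).card ≤ ℓ := by omega
              exact_mod_cast h2
          _ = (ℓ:ℝ) * Real.exp 1 ^ ℓ * ((k:ℝ)^2/d + ℓ)^ℓ := by ring


lemma inner_eq (d k : ℕ) (T₁ T₂ : Finset (Fin d)) (σ₁ σ₂ : Fin d → Bool) :
    ∑ i : Fin d, ((if i ∈ T₁ then (if σ₁ i then (1:ℝ) else -1) / Real.sqrt ((k:ℝ)+1) else 0) *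
        (if i ∈ T₂ then (if σ₂ i then (1:ℝ) else -1) / Real.sqrt ((k:ℝ)+1) else 0))
    = (∑ i ∈ T₁ ∩ T₂, eps (σ₁ i) * eps (σ₂ i)) / ((k:ℝ)+1) := by
  have hs : Real.sqrt ((k:ℝ)+1) * Real.sqrt ((k:ℝ)+1) = (k:ℝ)+1 :=
    Real.mul_self_sqrt (by positivity)
  have hterm : ∀ i : Fin d,
      ((if i ∈ T₁ then (if σ₁ i then (1:ℝ) else -1) / Real.sqrt ((k:ℝ)+1) else 0) *
        (if i ∈ T₂ then (if σ₂ i then (1:ℝ) else -1) / Real.sqrt ((k:ℝ)+1) else 0))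
      = if i ∈ T₁ ∩ T₂ then (eps (σ₁ i) * eps (σ₂ i))/((k:ℝ)+1) else 0 := by
    intro i
    by_cases h₁ : i ∈ T₁ <;> by_cases h₂ : i ∈ T₂ <;>
      simp only [h₁, h₂, if_true, if_false, Finset.mem_inter, and_true, and_false,
        true_and, false_and, mul_zero, zero_mul, if_neg, not_false_iff]
    show eps (σ₁ i) / _ * (eps (σ₂ i) / _) = _
    rw [div_mul_div_comm, hs]
  simp_rw [hterm]
  rw [Finset.sum_ite_mem, Finset.univ_inter, Finset.sum_div]

/-- Moment bound for the inner product of two independent uniformly random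
k-sparse sign vectors with entries of magnitude 1/√(k+1):
E[⟨x⁽¹⁾, x⁽²⁾⟩^{2ℓ}] ≤ (Cℓ)^ℓ (1/d + ℓ/k²)^ℓ for an absolute constant C > 0.
The distribution is realized by a uniform support T of size k together with
i.i.d. uniform signs σ. -/
theorem stmt11 :
    ∃ C : ℝ, 0 < C ∧
      ∀ (d k : ℕ), 0 < k → k ≤ d → ∀ ℓ : ℕ, 0 < ℓ →
        letI vec : Finset (Fin d) → (Fin d → Bool) → Fin d → ℝ := fun T σ i =>
          if i ∈ T then (if σ i then 1 else -1) / Real.sqrt (k + 1) else 0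
        (∑ T₁ ∈ (univ : Finset (Fin d)).powersetCard k,
          ∑ T₂ ∈ (univ : Finset (Fin d)).powersetCard k,
            ∑ σ₁ : Fin d → Bool, ∑ σ₂ : Fin d → Bool,
              (∑ i, vec T₁ σ₁ i * vec T₂ σ₂ i) ^ (2 * ℓ))
          / ((d.choose k : ℝ) * 2 ^ d) ^ 2
        ≤ (C * ℓ) ^ ℓ * (1 / d + (ℓ : ℝ) / k ^ 2) ^ ℓ := by
  refine ⟨16, by norm_num, ?_⟩
  intro d k hk hkd ℓ hl
  have hd : 0 < d := lt_of_lt_of_le hk hkd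
  have hdR : (0:ℝ) < d := by exact_mod_cast hd
  have hkR : (0:ℝ) < k := by exact_mod_cast hk
  have hchoose : (0:ℝ) < d.choose k := by exact_mod_cast Nat.choose_pos hkd
  have hk1 : (0:ℝ) < (k:ℝ)+1 := by positivity
  set A : ℝ := (k:ℝ)^2/d + ℓ with hA
  set P := (univ : Finset (Fin d)).powersetCard k with hP
  -- per-pair bound
  have hpair : ∀ T₁ T₂ : Finset (Fin d),
      ∑ σ₁ : Fin d → Bool, ∑ σ₂ : Fin d → Bool,
        (∑ i : Fin d, ((if i ∈ T₁ then (if σ₁ i then (1:ℝ) else -1) / Real.sqrt ((k:ℝ)+1) else 0) *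
          (if i ∈ T₂ then (if σ₂ i then (1:ℝ) else -1) / Real.sqrt ((k:ℝ)+1) else 0)))^(2*ℓ)
      ≤ 4^d * Dr ℓ * (((T₁ ∩ T₂).card : ℝ)^ℓ / ((k:ℝ)+1)^(2*ℓ)) := by
    intro T₁ T₂
    have h1 : ∀ σ₁ σ₂ : Fin d → Bool,
        (∑ i : Fin d, ((if i ∈ T₁ then (if σ₁ i then (1:ℝ) else -1) / Real.sqrt ((k:ℝ)+1) else 0) *
          (if i ∈ T₂ then (if σ₂ i then (1:ℝ) else -1) / Real.sqrt ((k:ℝ)+1) else 0)))^(2*ℓ)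
        = (∑ i ∈ T₁ ∩ T₂, eps (σ₁ i) * eps (σ₂ i))^(2*ℓ) / ((k:ℝ)+1)^(2*ℓ) := by
      intro σ₁ σ₂
      rw [inner_eq, div_pow]
    calc ∑ σ₁ : Fin d → Bool, ∑ σ₂ : Fin d → Bool,
          (∑ i : Fin d, ((if i ∈ T₁ then (if σ₁ i then (1:ℝ) else -1) / Real.sqrt ((k:ℝ)+1) else 0) *
            (if i ∈ T₂ then (if σ₂ i then (1:ℝ) else -1) / Real.sqrt ((k:ℝ)+1) else 0)))^(2*ℓ)
        = (∑ σ₁ : Fin d → Bool, ∑ σ₂ : Fin d → Bool,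
            (∑ i ∈ T₁ ∩ T₂, eps (σ₁ i) * eps (σ₂ i))^(2*ℓ)) / ((k:ℝ)+1)^(2*ℓ) := by
          simp_rw [h1, ← Finset.sum_div]
      _ = 2^d * (∑ τ : Fin d → Bool, (∑ i ∈ T₁ ∩ T₂, eps (τ i))^(2*ℓ)) / ((k:ℝ)+1)^(2*ℓ) := by
          rw [radB]
      _ ≤ 2^d * (2^d * Dr ℓ * (((T₁ ∩ T₂).card : ℝ))^ℓ) / ((k:ℝ)+1)^(2*ℓ) := by
          apply div_le_div_of_nonneg_right _ (by positivity)
          exact mul_le_mul_of_nonneg_left (radA d (T₁ ∩ T₂) ℓ) (by positivity)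
      _ = 4^d * Dr ℓ * (((T₁ ∩ T₂).card : ℝ)^ℓ / ((k:ℝ)+1)^(2*ℓ)) := by
          rw [show (4:ℝ)^d = 2^d * 2^d by rw [← mul_pow]; norm_num]
          ring
  -- assemble
  rw [div_le_iff₀ (by positivity)]
  set c : ℝ := 4^d * Dr ℓ / ((k:ℝ)+1)^(2*ℓ) with hc
  have hc0 : 0 ≤ c := by
    rw [hc]
    have := Dr_nonneg ℓ
    positivity
  calc ∑ T₁ ∈ P, ∑ T₂ ∈ P, ∑ σ₁ : Fin d → Bool, ∑ σ₂ : Fin d → Bool,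
        (∑ i : Fin d, ((if i ∈ T₁ then (if σ₁ i then (1:ℝ) else -1) / Real.sqrt ((k:ℝ)+1) else 0) *
          (if i ∈ T₂ then (if σ₂ i then (1:ℝ) else -1) / Real.sqrt ((k:ℝ)+1) else 0)))^(2*ℓ)
      ≤ ∑ T₁ ∈ P, ∑ T₂ ∈ P, c * ((T₁ ∩ T₂).card : ℝ)^ℓ := by
        apply Finset.sum_le_sum
        intro T₁ _
        apply Finset.sum_le_sum
        intro T₂ _
        calc ∑ σ₁ : Fin d → Bool, ∑ σ₂ : Fin d → Bool,
              (∑ i : Fin d, ((if i ∈ T₁ then (if σ₁ i then (1:ℝ) else -1) / Real.sqrt ((k:ℝ)+1) else 0) *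
                (if i ∈ T₂ then (if σ₂ i then (1:ℝ) else -1) / Real.sqrt ((k:ℝ)+1) else 0)))^(2*ℓ)
            ≤ 4^d * Dr ℓ * (((T₁ ∩ T₂).card : ℝ)^ℓ / ((k:ℝ)+1)^(2*ℓ)) := hpair T₁ T₂
          _ = c * ((T₁ ∩ T₂).card : ℝ)^ℓ := by rw [hc]; ring
    _ = c * ∑ T₁ ∈ P, ∑ T₂ ∈ P, ((T₁ ∩ T₂).card : ℝ)^ℓ := by
        rw [Finset.mul_sum]
        exact Finset.sum_congr rfl fun T₁ _ => (Finset.mul_sum _ _ _).symm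
    _ ≤ c * ((d.choose k : ℝ)^2 * ((ℓ:ℝ) * Real.exp 1 ^ ℓ * A^ℓ)) :=
        mul_le_mul_of_nonneg_left (stepC d k ℓ hk hkd hl) hc0
    _ ≤ (16 * (ℓ:ℝ))^ℓ * (1/(d:ℝ) + (ℓ:ℝ)/(k:ℝ)^2)^ℓ * ((d.choose k : ℝ) * 2^d)^2 := by
        have h2 : A^ℓ / ((k:ℝ)+1)^(2*ℓ) = (A/((k:ℝ)+1)^2)^ℓ := by
          rw [div_pow, ← pow_mul]
        have hA0 : 0 ≤ A := by rw [hA]; positivity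
        have h3 : A/((k:ℝ)+1)^2 ≤ 1/(d:ℝ) + (ℓ:ℝ)/(k:ℝ)^2 := by
          have e0 : (k:ℝ)^2 ≤ ((k:ℝ)+1)^2 := by nlinarith
          have e1 : ((k:ℝ)^2/d)/((k:ℝ)+1)^2 ≤ 1/(d:ℝ) := by
            rw [div_div, div_le_div_iff₀ (by positivity) hdR]
            nlinarith
          have e2 : (ℓ:ℝ)/((k:ℝ)+1)^2 ≤ (ℓ:ℝ)/(k:ℝ)^2 :=
            div_le_div_of_nonneg_left (by positivity) (by positivity) e0
          calc A/((k:ℝ)+1)^2 = ((k:ℝ)^2/d)/((k:ℝ)+1)^2 + (ℓ:ℝ)/((k:ℝ)+1)^2 := by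
                rw [hA, add_div]
            _ ≤ 1/(d:ℝ) + (ℓ:ℝ)/(k:ℝ)^2 := add_le_add e1 e2
        have h3' : (A/((k:ℝ)+1)^2)^ℓ ≤ (1/(d:ℝ) + (ℓ:ℝ)/(k:ℝ)^2)^ℓ :=
          pow_le_pow_left₀ (by positivity) h3 ℓ
        have h5 : Dr ℓ * (ℓ:ℝ) * Real.exp 1 ^ ℓ ≤ (16 * (ℓ:ℝ))^ℓ := by
          have b1 : Dr ℓ ≤ (2*(ℓ:ℝ))^ℓ := by
            have := Dr_le ℓ
            calc Dr ℓ ≤ ((2*ℓ : ℕ) : ℝ)^ℓ := by exact_mod_cast this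
              _ = (2*(ℓ:ℝ))^ℓ := by push_cast; ring
          have b2 : (ℓ:ℝ) ≤ 2^ℓ := by
            have := ℓ.lt_two_pow_self
            have h' : ℓ ≤ 2^ℓ := this.le
            exact_mod_cast h'
          have b3 : Real.exp 1 ^ ℓ ≤ 4^ℓ := by
            apply pow_le_pow_left₀ (Real.exp_pos 1).le
            calc Real.exp 1 ≤ 2.7182818286 := Real.exp_one_lt_d9.le
              _ ≤ 4 := by norm_num
          calc Dr ℓ * (ℓ:ℝ) * Real.exp 1 ^ ℓ
              ≤ (2*(ℓ:ℝ))^ℓ * 2^ℓ * 4^ℓ := by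
                apply mul_le_mul _ b3 (by positivity) (by positivity)
                apply mul_le_mul b1 b2 (Nat.cast_nonneg ℓ) (by positivity)
            _ = (16*(ℓ:ℝ))^ℓ := by
                ring_nf
                rw [show (2:ℝ)^(ℓ*2) = 4^ℓ by rw [mul_comm, pow_mul]; norm_num,
                  mul_assoc, ← mul_pow]
                norm_num
        have key : Dr ℓ * ((ℓ:ℝ) * Real.exp 1 ^ ℓ * A^ℓ) / ((k:ℝ)+1)^(2*ℓ)
            ≤ (16 * (ℓ:ℝ))^ℓ * (1/(d:ℝ) + (ℓ:ℝ)/(k:ℝ)^2)^ℓ := by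
          calc Dr ℓ * ((ℓ:ℝ) * Real.exp 1 ^ ℓ * A^ℓ) / ((k:ℝ)+1)^(2*ℓ)
              = (Dr ℓ * (ℓ:ℝ) * Real.exp 1 ^ ℓ) * (A^ℓ / ((k:ℝ)+1)^(2*ℓ)) := by ring
            _ = (Dr ℓ * (ℓ:ℝ) * Real.exp 1 ^ ℓ) * (A/((k:ℝ)+1)^2)^ℓ := by rw [h2]
            _ ≤ (16 * (ℓ:ℝ))^ℓ * (1/(d:ℝ) + (ℓ:ℝ)/(k:ℝ)^2)^ℓ := by
                apply mul_le_mul h5 h3' (by positivity) (by positivity)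
                
        calc c * ((d.choose k : ℝ)^2 * ((ℓ:ℝ) * Real.exp 1 ^ ℓ * A^ℓ))
            = ((d.choose k : ℝ)^2 * 4^d)
                * (Dr ℓ * ((ℓ:ℝ) * Real.exp 1 ^ ℓ * A^ℓ) / ((k:ℝ)+1)^(2*ℓ)) := by
              rw [hc]; ring
          _ ≤ ((d.choose k : ℝ)^2 * 4^d)
                * ((16 * (ℓ:ℝ))^ℓ * (1/(d:ℝ) + (ℓ:ℝ)/(k:ℝ)^2)^ℓ) :=
              mul_le_mul_of_nonneg_left key (by positivity)
          _ = (16 * (ℓ:ℝ))^ℓ * (1/(d:ℝ) + (ℓ:ℝ)/(k:ℝ)^2)^ℓ * ((d.choose k : ℝ) * 2^d)^2 := by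
              rw [show (4:ℝ)^d = 2^d * 2^d by rw [← mul_pow]; norm_num]
              ring
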